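/- Let (ψ_t)_{t>0} be a family of probability generating functions, ψ_t(s) = Σ_{k≥0} p_k(t) s^k with p_k(t) ≥ 0 and Σ_{k≥0} p_k(t) = 1, with ψ_t(0) < 1 for all t and ψ_t(0) → 1 as t → ∞. Let g(s) = Σ_{k≥1} α_k s^k with α_k ≥ 0, Σ_{k≥1} α_k = 1 and Σ_{k≥1} k·α_k < ∞, and suppose that for every s ∈ [0,1]: (ψ_t(s) − ψ_t(0)) / (1 − ψ_t(0)) → g(s) as t → ∞. Then for every integer x ≥ 1 and every s ∈ [0,1): lim_{t→∞} x·ψ_t'(s)·ψ_t(s)^{x−1} / (1 − ψ_t(0)^x) = g'(s), and g'(s) ≤ g'(1) = Σ_{k≥1} k·α_k < ∞. -/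

import Mathlib

open Set Filter Topology

private lemma aux_summable_pow {c : ℕ → ℝ} (hc : ∀ k, |c k| ≤ 1) {u : ℝ} (hu : |u| < 1) :
    Summable fun k => c k * u ^ k := by
  refine Summable.of_norm_bounded (summable_geometric_of_lt_one (abs_nonneg u) hu) fun k => ?_
  rw [Real.norm_eq_abs, abs_mul, abs_pow]
  exact mul_le_of_le_one_left (by positivity) (hc k)

private lemma aux_summable_aux {ρ : ℝ} (h0 : 0 ≤ ρ) (h1 : ρ < 1) :
    Summable fun k : ℕ => (k : ℝ) * ρ ^ (k - 1) := by
  rw [← summable_nat_add_iff 1]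
  have h1' : ‖ρ‖ < 1 := by rwa [Real.norm_eq_abs, abs_of_nonneg h0]
  have := (summable_pow_mul_geometric_of_norm_lt_one 1 h1').add
    (summable_geometric_of_lt_one h0 h1)
  refine this.congr fun k => ?_
  simp only [Nat.add_sub_cancel, pow_one]
  push_cast
  ring

private lemma aux_summable_deriv {c : ℕ → ℝ} (hc : ∀ k, |c k| ≤ 1) {u : ℝ} (hu : |u| < 1) :
    Summable fun k : ℕ => (k : ℝ) * c k * u ^ (k - 1) := by
  refine Summable.of_norm_bounded (aux_summable_aux (abs_nonneg u) hu) fun k => ?_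
  rw [Real.norm_eq_abs, abs_mul, abs_mul, abs_pow, Nat.abs_cast]
  refine mul_le_mul_of_nonneg_right ?_ (by positivity)
  exact mul_le_of_le_one_right (Nat.cast_nonneg k) (hc k)

private lemma aux_hasDerivAt {c : ℕ → ℝ} (hc : ∀ k, |c k| ≤ 1) {s : ℝ} (hs : |s| < 1) :
    HasDerivAt (fun u => ∑' k, c k * u ^ k) (∑' k : ℕ, (k : ℝ) * c k * s ^ (k - 1)) s := by
  set r : ℝ := (|s| + 1) / 2 with hr
  have hr0 : 0 ≤ r := by positivity
  have hrs : |s| < r := by rw [hr]; linarith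
  have hr1 : r < 1 := by rw [hr]; linarith
  have hrn : ‖r‖ < 1 := by rwa [Real.norm_eq_abs, abs_of_nonneg hr0]
  have hsum : Summable fun k : ℕ => (k : ℝ) * r ^ (k - 1) := aux_summable_aux hr0 hr1
  have key := hasDerivAt_of_tendstoUniformlyOn (l := (atTop : Filter ℕ)) (f := fun (N : ℕ) (u : ℝ) =>
      ∑ k ∈ Finset.range N, c k * u ^ k)
    (f' := fun (N : ℕ) (u : ℝ) => ∑ k ∈ Finset.range N, c k * ((k : ℝ) * u ^ (k - 1)))
    (g := fun u => ∑' k, c k * u ^ k)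
    (g' := fun u => ∑' k, c k * ((k : ℝ) * u ^ (k - 1)))
    (Metric.isOpen_ball (x := (0:ℝ)) (ε := r)) ?_ ?_ ?_ (x := s) ?_
  · have : (∑' k, c k * ((k : ℝ) * s ^ (k - 1))) = ∑' k : ℕ, (k : ℝ) * c k * s ^ (k - 1) :=
      tsum_congr fun k => by ring
    simp only [this] at key
    exact key
  · refine tendstoUniformlyOn_tsum_nat hsum fun k u hu => ?_
    have hu' : |u| < r := by simpa [Real.norm_eq_abs] using mem_ball_zero_iff.mp hu
    rw [Real.norm_eq_abs, abs_mul, abs_mul, abs_pow, Nat.abs_cast]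
    calc |c k| * ((k : ℝ) * |u| ^ (k - 1)) ≤ 1 * ((k : ℝ) * |u| ^ (k - 1)) := by
          refine mul_le_mul_of_nonneg_right (hc k) (by positivity)
      _ = (k : ℝ) * |u| ^ (k - 1) := one_mul _
      _ ≤ (k : ℝ) * r ^ (k - 1) := by
          refine mul_le_mul_of_nonneg_left (pow_le_pow_left₀ (abs_nonneg u) hu'.le _)
            (Nat.cast_nonneg k)
  · filter_upwards with N u _
    exact HasDerivAt.fun_sum fun k _ => (hasDerivAt_pow k u).const_mul (c k)
  · intro u hu
    have hu' : |u| < 1 := lt_of_lt_of_le (by simpa [Real.norm_eq_abs] using mem_ball_zero_iff.mp hu) hr1.le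
    exact (aux_summable_pow hc hu').hasSum.tendsto_sum_nat
  · exact mem_ball_zero_iff.mpr (by simpa [Real.norm_eq_abs] using hrs)

private lemma aux_pow_sub_le {b a r : ℝ} (hb : 0 ≤ b) (hba : b ≤ a) (har : a ≤ r) (k : ℕ) :
    a ^ k - b ^ k ≤ (k : ℝ) * r ^ (k - 1) * (a - b) := by
  have ha : 0 ≤ a := hb.trans hba
  have hr : 0 ≤ r := ha.trans har
  rw [← geom_sum₂_mul a b k]
  refine mul_le_mul_of_nonneg_right ?_ (by linarith)
  calc (∑ i ∈ Finset.range k, a ^ i * b ^ (k - 1 - i))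
      ≤ ∑ i ∈ Finset.range k, r ^ (k - 1) := by
        refine Finset.sum_le_sum fun i hi => ?_
        have hik : i ≤ k - 1 := Nat.le_sub_one_of_lt (Finset.mem_range.mp hi)
        calc a ^ i * b ^ (k - 1 - i) ≤ r ^ i * r ^ (k - 1 - i) :=
              mul_le_mul (pow_le_pow_left₀ ha har i)
                (pow_le_pow_left₀ hb (hba.trans har) _) (by positivity) (by positivity)
          _ = r ^ (k - 1) := by rw [← pow_add, Nat.add_sub_cancel' hik]
    _ = (k : ℝ) * r ^ (k - 1) := by simp [Finset.sum_const, nsmul_eq_mul]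

private lemma aux_le_pow_sub {b a : ℝ} (hb : 0 ≤ b) (hba : b ≤ a) (k : ℕ) :
    (k : ℝ) * b ^ (k - 1) * (a - b) ≤ a ^ k - b ^ k := by
  rw [← geom_sum₂_mul a b k]
  refine mul_le_mul_of_nonneg_right ?_ (by linarith)
  calc (k : ℝ) * b ^ (k - 1) = ∑ _j ∈ Finset.range k, b ^ (k - 1) := by
        simp [Finset.sum_const, nsmul_eq_mul]
    _ ≤ ∑ j ∈ Finset.range k, a ^ j * b ^ (k - 1 - j) := by
        refine Finset.sum_le_sum fun j hj => ?_
        have hjk : j ≤ k - 1 := Nat.le_sub_one_of_lt (Finset.mem_range.mp hj)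
        calc b ^ (k - 1) = b ^ j * b ^ (k - 1 - j) := by
              rw [← pow_add, Nat.add_sub_cancel' hjk]
          _ ≤ a ^ j * b ^ (k - 1 - j) :=
              mul_le_mul_of_nonneg_right (pow_le_pow_left₀ hb hba j) (by positivity)

private lemma aux_taylor2 {b a r : ℝ} (hb : 0 ≤ b) (hba : b ≤ a) (har : a ≤ r) (k : ℕ) :
    a ^ k - b ^ k - (k : ℝ) * b ^ (k - 1) * (a - b)
      ≤ (k : ℝ) ^ 2 * r ^ (k - 2) * (a - b) ^ 2 := by
  have ha : 0 ≤ a := hb.trans hba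
  have hr : 0 ≤ r := ha.trans har
  have hab : 0 ≤ a - b := by linarith
  have expand : a ^ k - b ^ k - (k : ℝ) * b ^ (k - 1) * (a - b)
      = (∑ j ∈ Finset.range k, (a ^ j * b ^ (k - 1 - j) - b ^ (k - 1))) * (a - b) := by
    rw [Finset.sum_sub_distrib, sub_mul, geom_sum₂_mul]
    simp only [Finset.sum_const, Finset.card_range, nsmul_eq_mul]
  have key : (∑ j ∈ Finset.range k, (a ^ j * b ^ (k - 1 - j) - b ^ (k - 1)))
      ≤ (k : ℝ) ^ 2 * r ^ (k - 2) * (a - b) := by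
    calc (∑ j ∈ Finset.range k, (a ^ j * b ^ (k - 1 - j) - b ^ (k - 1)))
        ≤ ∑ _j ∈ Finset.range k, (k : ℝ) * r ^ (k - 2) * (a - b) := by
          refine Finset.sum_le_sum fun j hj => ?_
          have hjlt : j < k := Finset.mem_range.mp hj
          have hjk : j ≤ k - 1 := Nat.le_sub_one_of_lt hjlt
          have hbj : a ^ j * b ^ (k - 1 - j) - b ^ (k - 1) = (a ^ j - b ^ j) * b ^ (k - 1 - j) := by
            rw [sub_mul, ← pow_add, Nat.add_sub_cancel' hjk]
          rw [hbj]
          rcases Nat.eq_zero_or_pos j with hj0 | hj0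
          · subst hj0
            simp only [pow_zero, sub_self, zero_mul]
            positivity
          · have e1 : (a ^ j - b ^ j) * b ^ (k - 1 - j)
                ≤ ((j : ℝ) * r ^ (j - 1) * (a - b)) * r ^ (k - 1 - j) := by
              refine mul_le_mul (aux_pow_sub_le hb hba har j)
                (pow_le_pow_left₀ hb (hba.trans har) _) (by positivity) (by positivity)
            have e2 : ((j : ℝ) * r ^ (j - 1) * (a - b)) * r ^ (k - 1 - j)
                = (j : ℝ) * r ^ (k - 2) * (a - b) := by
              rw [show ((j : ℝ) * r ^ (j - 1) * (a - b)) * r ^ (k - 1 - j)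
                  = (j : ℝ) * (r ^ (j - 1) * r ^ (k - 1 - j)) * (a - b) by ring, ← pow_add,
                show (j - 1) + (k - 1 - j) = k - 2 by omega]
            have e3 : (j : ℝ) * r ^ (k - 2) * (a - b) ≤ (k : ℝ) * r ^ (k - 2) * (a - b) := by
              have : (j : ℝ) ≤ (k : ℝ) := Nat.cast_le.mpr hjlt.le
              have h2 : (0:ℝ) ≤ r ^ (k - 2) * (a - b) := by positivity
              calc (j : ℝ) * r ^ (k - 2) * (a - b) = (j : ℝ) * (r ^ (k - 2) * (a - b)) := by ring
                _ ≤ (k : ℝ) * (r ^ (k - 2) * (a - b)) := mul_le_mul_of_nonneg_right this h2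
                _ = (k : ℝ) * r ^ (k - 2) * (a - b) := by ring
            linarith [e1, e2 ▸ e1, e3]
      _ = (k : ℝ) * ((k : ℝ) * r ^ (k - 2) * (a - b)) := by
          simp [Finset.sum_const, nsmul_eq_mul]
      _ = (k : ℝ) ^ 2 * r ^ (k - 2) * (a - b) := by ring
  calc a ^ k - b ^ k - (k : ℝ) * b ^ (k - 1) * (a - b)
      = (∑ j ∈ Finset.range k, (a ^ j * b ^ (k - 1 - j) - b ^ (k - 1))) * (a - b) := expand
    _ ≤ ((k : ℝ) ^ 2 * r ^ (k - 2) * (a - b)) * (a - b) := mul_le_mul_of_nonneg_right key hab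
    _ = (k : ℝ) ^ 2 * r ^ (k - 2) * (a - b) ^ 2 := by ring

private lemma aux_summable_sq {r : ℝ} (h0 : 0 ≤ r) (h1 : r < 1) :
    Summable fun k : ℕ => (k : ℝ) ^ 2 * r ^ (k - 2) := by
  rw [← summable_nat_add_iff 2]
  have hn : ‖r‖ < 1 := by rwa [Real.norm_eq_abs, abs_of_nonneg h0]
  have h2 := summable_pow_mul_geometric_of_norm_lt_one (R := ℝ) 2 hn
  have h1' := summable_pow_mul_geometric_of_norm_lt_one (R := ℝ) 1 hn
  have h0' := summable_geometric_of_lt_one h0 h1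
  have := (h2.add (h1'.mul_left 4)).add (h0'.mul_left 4)
  refine this.congr fun k => ?_
  simp only [Nat.add_sub_cancel]
  push_cast
  ring

private lemma aux_slope_bound {c : ℕ → ℝ} (hc0 : ∀ k, 0 ≤ c k) (hc1 : ∀ k, c k ≤ 1)
    {s h r : ℝ} (hs : 0 ≤ s) (hh : 0 < h) (hsr : s + h ≤ r) (hr1 : r < 1) :
    |(∑' k, c k * (s + h) ^ k) - (∑' k, c k * s ^ k)
        - h * ∑' k : ℕ, (k : ℝ) * c k * s ^ (k - 1)|
      ≤ (∑' k : ℕ, (k : ℝ) ^ 2 * r ^ (k - 2)) * h ^ 2 := by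
  have habs : ∀ k, |c k| ≤ 1 := fun k => by rw [abs_of_nonneg (hc0 k)]; exact hc1 k
  have hr0 : 0 ≤ r := le_trans (by linarith) hsr
  have hs1 : |s| < 1 := by rw [abs_of_nonneg hs]; linarith
  have hsh1 : |s + h| < 1 := by rw [abs_of_nonneg (by linarith)]; linarith
  have S1 : Summable fun k => c k * (s + h) ^ k := aux_summable_pow habs hsh1
  have S2 : Summable fun k => c k * s ^ k := aux_summable_pow habs hs1
  have S3 : Summable fun k : ℕ => (k : ℝ) * c k * s ^ (k - 1) := aux_summable_deriv habs hs1
  have hBs : Summable fun k : ℕ => (k : ℝ) ^ 2 * r ^ (k - 2) := aux_summable_sq hr0 hr1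
  have hper : ∀ k : ℕ,
      |c k * (s + h) ^ k - c k * s ^ k - h * ((k : ℝ) * c k * s ^ (k - 1))|
        ≤ (k : ℝ) ^ 2 * r ^ (k - 2) * h ^ 2 := by
    intro k
    have lo := aux_le_pow_sub hs (by linarith : s ≤ s + h) k
    have hi := aux_taylor2 hs (by linarith : s ≤ s + h) hsr k
    rw [add_sub_cancel_left] at lo hi
    have e : c k * (s + h) ^ k - c k * s ^ k - h * ((k : ℝ) * c k * s ^ (k - 1))
        = c k * ((s + h) ^ k - s ^ k - (k : ℝ) * s ^ (k - 1) * h) := by ring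
    rw [e, abs_of_nonneg (mul_nonneg (hc0 k) (by linarith))]
    calc c k * ((s + h) ^ k - s ^ k - (k : ℝ) * s ^ (k - 1) * h)
        ≤ 1 * ((s + h) ^ k - s ^ k - (k : ℝ) * s ^ (k - 1) * h) :=
          mul_le_mul_of_nonneg_right (hc1 k) (by linarith)
      _ = (s + h) ^ k - s ^ k - (k : ℝ) * s ^ (k - 1) * h := one_mul _
      _ ≤ (k : ℝ) ^ 2 * r ^ (k - 2) * h ^ 2 := by linarith
  have e : (∑' k, c k * (s + h) ^ k) - (∑' k, c k * s ^ k)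
        - h * ∑' k : ℕ, (k : ℝ) * c k * s ^ (k - 1)
      = ∑' k : ℕ, (c k * (s + h) ^ k - c k * s ^ k - h * ((k : ℝ) * c k * s ^ (k - 1))) := by
    rw [← tsum_mul_left, ← Summable.tsum_sub S1 S2, ← Summable.tsum_sub (S1.sub S2) (S3.mul_left h)]
  rw [e]
  have hsumin : Summable fun k : ℕ =>
      (c k * (s + h) ^ k - c k * s ^ k - h * ((k : ℝ) * c k * s ^ (k - 1))) :=
    (S1.sub S2).sub (S3.mul_left h)
  calc |∑' k : ℕ, (c k * (s + h) ^ k - c k * s ^ k - h * ((k : ℝ) * c k * s ^ (k - 1)))|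
      ≤ ∑' k : ℕ, |c k * (s + h) ^ k - c k * s ^ k - h * ((k : ℝ) * c k * s ^ (k - 1))| := by
        simpa [Real.norm_eq_abs] using norm_tsum_le_tsum_norm (f := fun k : ℕ =>
          (c k * (s + h) ^ k - c k * s ^ k - h * ((k : ℝ) * c k * s ^ (k - 1))))
          (by simpa [Real.norm_eq_abs] using hsumin.abs)
    _ ≤ ∑' k : ℕ, (k : ℝ) ^ 2 * r ^ (k - 2) * h ^ 2 := by
        refine Summable.tsum_le_tsum hper ?_ (hBs.mul_right _)
        exact hsumin.abs
    _ = (∑' k : ℕ, (k : ℝ) ^ 2 * r ^ (k - 2)) * h ^ 2 := by rw [tsum_mul_right]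

private lemma aux_deriv_tendsto {F : ℝ → ℕ → ℝ} {α : ℕ → ℝ}
    (hF0 : ∀ t k, 0 ≤ F t k) (hF1 : ∀ t k, F t k ≤ 1)
    (hα0 : ∀ k, 0 ≤ α k) (hα1 : ∀ k, α k ≤ 1)
    {s : ℝ} (hs0 : 0 ≤ s) (hs1 : s < 1)
    (hconv : ∀ u, 0 ≤ u → u < 1 →
      Tendsto (fun t => ∑' k, F t k * u ^ k) atTop (𝓝 (∑' k, α k * u ^ k))) :
    Tendsto (fun t => ∑' k : ℕ, (k : ℝ) * F t k * s ^ (k - 1)) atTop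
      (𝓝 (∑' k : ℕ, (k : ℝ) * α k * s ^ (k - 1))) := by
  set L := ∑' k : ℕ, (k : ℝ) * α k * s ^ (k - 1) with hL
  rw [Metric.tendsto_nhds]
  intro ε hε
  set r : ℝ := (s + 1) / 2 with hr
  have hr0 : 0 ≤ r := by rw [hr]; linarith
  have hsr : s < r := by rw [hr]; linarith
  have hr1 : r < 1 := by rw [hr]; linarith
  set B : ℝ := ∑' k : ℕ, (k : ℝ) ^ 2 * r ^ (k - 2) with hB
  have hB0 : 0 ≤ B := tsum_nonneg fun k => by positivity
  -- choose u close to s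
  have hmem : ∀ᶠ u in 𝓝[>] s, u ∈ Ioo s r := Ioo_mem_nhdsGT_of_mem ⟨le_refl s, hsr⟩
  have hsmall : ∀ᶠ u in 𝓝[>] s, (u - s) * B < ε / 4 := by
    have ht : Tendsto (fun u : ℝ => (u - s) * B) (𝓝[>] s) (𝓝 0) := by
      have := (((continuous_sub_right s).tendsto s).mul_const B)
      simp only [sub_self, zero_mul] at this
      exact this.mono_left nhdsWithin_le_nhds
    exact ht.eventually_lt_const (by positivity)
  obtain ⟨u, hu1, hu2⟩ := (hmem.and hsmall).exists
  have hus : 0 < u - s := sub_pos.mpr hu1.1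
  have hu1' : u < 1 := hu1.2.trans hr1
  have hu0 : 0 ≤ u := hs0.trans hu1.1.le
  have h2 := Metric.tendsto_nhds.mp (hconv u hu0 hu1') (ε * (u - s) / 8) (by positivity)
  have h3 := Metric.tendsto_nhds.mp (hconv s hs0 hs1) (ε * (u - s) / 8) (by positivity)
  filter_upwards [h2, h3] with t ht2 ht3
  rw [Real.dist_eq] at ht2 ht3 ⊢
  have A1 := aux_slope_bound (hF0 t) (hF1 t) hs0 hus
    (show s + (u - s) ≤ r by linarith [hu1.2]) hr1
  have A2 := aux_slope_bound hα0 hα1 hs0 hus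
    (show s + (u - s) ≤ r by linarith [hu1.2]) hr1
  rw [show s + (u - s) = u by ring] at A1 A2
  rw [← hB] at A1 A2
  set Dt := ∑' k : ℕ, (k : ℝ) * F t k * s ^ (k - 1)
  set ftu := ∑' k, F t k * u ^ k
  set fts := ∑' k, F t k * s ^ k
  set gu := ∑' k, α k * u ^ k
  set gs := ∑' k, α k * s ^ k
  have e1 := abs_le.mp A1
  have e2 := abs_le.mp A2
  have e3 := abs_lt.mp ht2
  have e4 := abs_lt.mp ht3
  have hq : (u - s) * B * (u - s) ≤ ε / 4 * (u - s) :=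
    mul_le_mul_of_nonneg_right hu2.le hus.le
  have k1 : (u - s) * (Dt - L) < (u - s) * ε := by nlinarith
  have k2 : (u - s) * (L - Dt) < (u - s) * ε := by nlinarith
  rw [abs_lt]
  constructor
  · have := (mul_lt_mul_iff_right₀ hus).mp k2
    linarith
  · exact (mul_lt_mul_iff_right₀ hus).mp k1
/-- For probability generating functions ψ_t(s) = Σ p_k(t) s^k with
ψ_t(0) < 1 and ψ_t(0) → 1, and g(s) = Σ_{k≥1} α_k s^k a probability generating
function with finite mean Σ k α_k, such that (ψ_t(s) − ψ_t(0))/(1 − ψ_t(0)) → g(s)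
for all s ∈ [0,1], one has for every integer x ≥ 1 and s ∈ [0,1):
x·ψ_t'(s)·ψ_t(s)^{x−1}/(1 − ψ_t(0)^x) → g'(s), and g'(s) ≤ g'(1) = Σ k α_k < ∞. -/
theorem coalescence_stmt15 (p : ℝ → ℕ → ℝ) (α : ℕ → ℝ)
    (hp0 : ∀ t k, 0 ≤ p t k)
    (hp1 : ∀ t, ∑' k, p t k = 1)
    (hα0 : ∀ k, 0 ≤ α k) (hα00 : α 0 = 0)
    (hα1 : ∑' k, α k = 1)
    (hαm : Summable fun k : ℕ => (k : ℝ) * α k) :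
    let ψ : ℝ → ℝ → ℝ := fun t s => ∑' k, p t k * s ^ k
    let g : ℝ → ℝ := fun s => ∑' k, α k * s ^ k
    (∀ t, ψ t 0 < 1) →
    Tendsto (fun t => ψ t 0) atTop (𝓝 1) →
    (∀ s ∈ Icc (0:ℝ) 1,
      Tendsto (fun t => (ψ t s - ψ t 0) / (1 - ψ t 0)) atTop (𝓝 (g s))) →
    (∀ x : ℕ, 1 ≤ x → ∀ s ∈ Ico (0:ℝ) 1,
        Tendsto
          (fun t => (x : ℝ) * deriv (ψ t) s * (ψ t s) ^ (x - 1) / (1 - (ψ t 0) ^ x))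
          atTop (𝓝 (deriv g s))) ∧
      (∀ s ∈ Ico (0:ℝ) 1, deriv g s ≤ ∑' k : ℕ, (k : ℝ) * α k) ∧
      HasDerivWithinAt g (∑' k : ℕ, (k : ℝ) * α k) (Iio 1) 1 := by
  intro ψ g hlt h0tend hconv
  have hpsum : ∀ t, Summable (p t) := by
    intro t
    by_contra hn
    simpa [tsum_eq_zero_of_not_summable hn] using hp1 t
  have hαsum : Summable α := by
    refine Summable.of_nonneg_of_le hα0 (fun k => ?_) hαm
    cases k with
    | zero => simp [hα00]
    | succ n =>
        have h1 : (1 : ℝ) ≤ ((n + 1 : ℕ) : ℝ) := by exact_mod_cast Nat.succ_le_succ (Nat.zero_le n)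
        calc α (n + 1) = 1 * α (n + 1) := (one_mul _).symm
          _ ≤ ((n + 1 : ℕ) : ℝ) * α (n + 1) := mul_le_mul_of_nonneg_right h1 (hα0 _)
  have hple : ∀ t k, p t k ≤ 1 := fun t k =>
    (Summable.le_tsum (hpsum t) k fun j _ => hp0 t j).trans_eq (hp1 t)
  have hα1' : ∀ k, α k ≤ 1 := fun k =>
    (Summable.le_tsum hαsum k fun j _ => hα0 j).trans_eq hα1
  have hpabs : ∀ t k, |p t k| ≤ 1 := fun t k => by
    rw [abs_of_nonneg (hp0 t k)]; exact hple t k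
  have hαabs : ∀ k, |α k| ≤ 1 := fun k => by
    rw [abs_of_nonneg (hα0 k)]; exact hα1' k
  have hψ00 : ∀ t, ψ t 0 = p t 0 := by
    intro t
    show (∑' k, p t k * (0:ℝ) ^ k) = p t 0
    rw [tsum_eq_single 0 (fun k hk => by simp [zero_pow hk])]
    simp
  have hψ0nn : ∀ t, 0 ≤ ψ t 0 := fun t => (hψ00 t).symm ▸ hp0 t 0
  have hden : ∀ t, 0 < 1 - ψ t 0 := fun t => by linarith [hlt t]
  have hgder : ∀ s : ℝ, |s| < 1 →
      HasDerivAt g (∑' k : ℕ, (k : ℝ) * α k * s ^ (k - 1)) s := fun s hs =>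
    aux_hasDerivAt hαabs hs
  have hψle1 : ∀ t, ∀ s : ℝ, 0 ≤ s → s ≤ 1 → ψ t s ≤ 1 := by
    intro t s h0 h1
    have hsm : Summable fun k => p t k * s ^ k := by
      refine Summable.of_nonneg_of_le (fun k => mul_nonneg (hp0 t k) (pow_nonneg h0 k))
        (fun k => ?_) (hpsum t)
      exact mul_le_of_le_one_right (hp0 t k) (pow_le_one₀ h0 h1)
    calc ψ t s ≤ ∑' k, p t k := by
          refine Summable.tsum_le_tsum (fun k => ?_) hsm (hpsum t)
          exact mul_le_of_le_one_right (hp0 t k) (pow_le_one₀ h0 h1)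
      _ = 1 := hp1 t
  have hψ0le : ∀ t, ∀ s : ℝ, 0 ≤ s → s ≤ 1 → ψ t 0 ≤ ψ t s := by
    intro t s h0 h1
    have hsm : Summable fun k => p t k * s ^ k := by
      refine Summable.of_nonneg_of_le (fun k => mul_nonneg (hp0 t k) (pow_nonneg h0 k))
        (fun k => ?_) (hpsum t)
      exact mul_le_of_le_one_right (hp0 t k) (pow_le_one₀ h0 h1)
    rw [hψ00 t]
    have := Summable.le_tsum hsm 0 fun j _ => mul_nonneg (hp0 t j) (pow_nonneg h0 j)
    simpa using this
  have hψs_tend : ∀ s : ℝ, 0 ≤ s → s ≤ 1 → Tendsto (fun t => ψ t s) atTop (𝓝 1) :=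
    fun s h0 h1 => tendsto_of_tendsto_of_tendsto_of_le_of_le h0tend tendsto_const_nhds
      (fun t => hψ0le t s h0 h1) (fun t => hψle1 t s h0 h1)
  set c : ℝ → ℕ → ℝ := fun t k => if k = 0 then 0 else p t k / (1 - ψ t 0) with hcdef
  have hc0 : ∀ t k, 0 ≤ c t k := by
    intro t k
    by_cases hk : k = 0
    · simp [hcdef, hk]
    · simp only [hcdef, if_neg hk]
      exact div_nonneg (hp0 t k) (hden t).le
  have hc1 : ∀ t k, c t k ≤ 1 := by
    intro t k
    by_cases hk : k = 0
    · simp [hcdef, hk]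
    · simp only [hcdef, if_neg hk]
      rw [div_le_one (hden t)]
      have hsum2 : p t 0 + p t k ≤ 1 := by
        have := Summable.sum_le_tsum ({0, k} : Finset ℕ) (fun i _ => hp0 t i) (hpsum t)
        rwa [Finset.sum_pair (Ne.symm hk), hp1 t] at this
      rw [hψ00 t]; linarith
  have hFid : ∀ t, ∀ u : ℝ, |u| < 1 →
      (∑' k, c t k * u ^ k) = (ψ t u - ψ t 0) / (1 - ψ t 0) := by
    intro t u hu
    have hgeo : Summable fun k : ℕ => |u| ^ k := summable_geometric_of_lt_one (abs_nonneg u) hu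
    have hEsum : Summable fun k : ℕ => (if k = 0 then 0 else p t k) * u ^ k := by
      refine Summable.of_norm_bounded hgeo fun k => ?_
      rw [Real.norm_eq_abs, abs_mul, abs_pow]
      refine mul_le_of_le_one_left (by positivity) ?_
      by_cases hk : k = 0 <;> simp [hk, abs_of_nonneg (hp0 t k), hple t k]
    have hite : Summable fun k : ℕ => if k = 0 then p t 0 else 0 :=
      ⟨p t 0, hasSum_ite_eq 0 (p t 0)⟩
    have hsplit : ψ t u = (∑' k : ℕ, (if k = 0 then 0 else p t k) * u ^ k) + p t 0 := by
      have hpt : ∀ k : ℕ, p t k * u ^ k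
          = (if k = 0 then 0 else p t k) * u ^ k + (if k = 0 then p t 0 else 0) := by
        intro k; by_cases hk : k = 0 <;> simp [hk]
      calc ψ t u = ∑' k : ℕ, ((if k = 0 then 0 else p t k) * u ^ k
            + (if k = 0 then p t 0 else 0)) := tsum_congr hpt
        _ = (∑' k : ℕ, (if k = 0 then 0 else p t k) * u ^ k)
            + ∑' k : ℕ, (if k = 0 then p t 0 else 0) := Summable.tsum_add hEsum hite
        _ = _ + p t 0 := by rw [tsum_ite_eq]
    have e2 : ∀ k : ℕ, c t k * u ^ k
        = ((if k = 0 then 0 else p t k) * u ^ k) / (1 - ψ t 0) := by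
      intro k
      by_cases hk : k = 0
      · simp [hcdef, hk]
      · simp only [hcdef, if_neg hk]
        ring
    calc (∑' k, c t k * u ^ k)
        = ∑' k : ℕ, ((if k = 0 then 0 else p t k) * u ^ k) / (1 - ψ t 0) := tsum_congr e2
      _ = (∑' k : ℕ, (if k = 0 then 0 else p t k) * u ^ k) / (1 - ψ t 0) := tsum_div_const
      _ = (ψ t u - ψ t 0) / (1 - ψ t 0) := by rw [hψ00 t, hsplit]; simp
  have hDid : ∀ t, ∀ s : ℝ, (∑' k : ℕ, (k : ℝ) * c t k * s ^ (k - 1))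
      = (∑' k : ℕ, (k : ℝ) * p t k * s ^ (k - 1)) / (1 - ψ t 0) := by
    intro t s
    rw [← tsum_div_const]
    refine tsum_congr fun k => ?_
    by_cases hk : k = 0
    · simp [hcdef, hk]
    · simp only [hcdef, if_neg hk]
      ring
  refine ⟨?_, ?_, ?_⟩
  · -- Part 1
    intro x hx s hs
    obtain ⟨hs0, hs1⟩ := hs
    have hsabs : |s| < 1 := by rw [abs_of_nonneg hs0]; exact hs1
    have hxR : (0:ℝ) < (x:ℝ) := by exact_mod_cast Nat.lt_of_lt_of_le Nat.zero_lt_one hx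
    have hconv' : ∀ u : ℝ, 0 ≤ u → u < 1 →
        Tendsto (fun t => ∑' k, c t k * u ^ k) atTop (𝓝 (∑' k, α k * u ^ k)) := by
      intro u hu0 hu1
      exact Tendsto.congr (fun t => (hFid t u (by rw [abs_of_nonneg hu0]; exact hu1)).symm)
        (hconv u ⟨hu0, hu1.le⟩)
    have hT1 : Tendsto (fun t => (∑' k : ℕ, (k : ℝ) * p t k * s ^ (k - 1)) / (1 - ψ t 0)) atTop
        (𝓝 (∑' k : ℕ, (k : ℝ) * α k * s ^ (k - 1))) :=
      (aux_deriv_tendsto hc0 hc1 hα0 hα1' hs0 hs1 hconv').congr fun t => hDid t s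
    have hpow1 : Tendsto (fun t => (ψ t s) ^ (x - 1)) atTop (𝓝 1) := by
      simpa using (hψs_tend s hs0 hs1.le).pow (x - 1)
    have hT2 : Tendsto (fun t => (x : ℝ) * (ψ t s) ^ (x - 1)) atTop (𝓝 ((x : ℝ) * 1)) :=
      tendsto_const_nhds.mul hpow1
    have hT3 : Tendsto (fun t => ∑ j ∈ Finset.range x, (ψ t 0) ^ j) atTop (𝓝 (x : ℝ)) := by
      have hcont : Continuous fun y : ℝ => ∑ j ∈ Finset.range x, y ^ j :=
        continuous_finset_sum _ fun j _ => continuous_pow j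
      have := (hcont.tendsto 1).comp h0tend
      simpa [Function.comp_def] using this
    have hfinal := (hT1.mul hT2).div hT3 (ne_of_gt hxR)
    have hval : (∑' k : ℕ, (k : ℝ) * α k * s ^ (k - 1)) * ((x : ℝ) * 1) / (x : ℝ)
        = deriv g s := by
      rw [(hgder s hsabs).deriv]
      field_simp
    rw [hval] at hfinal
    refine hfinal.congr fun t => ?_
    have hdt : deriv (ψ t) s = ∑' k : ℕ, (k : ℝ) * p t k * s ^ (k - 1) :=
      (aux_hasDerivAt (hpabs t) hsabs).deriv
    have hgeq : 1 - (ψ t 0) ^ x = (∑ j ∈ Finset.range x, (ψ t 0) ^ j) * (1 - ψ t 0) := by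
      have h := geom_sum_mul (ψ t 0) x
      linear_combination h
    have hGpos : 0 < ∑ j ∈ Finset.range x, (ψ t 0) ^ j := by
      have hmem : (0 : ℕ) ∈ Finset.range x := Finset.mem_range.mpr (by omega)
      have := Finset.single_le_sum (f := fun j => (ψ t 0) ^ j)
        (fun j _ => pow_nonneg (hψ0nn t) j) hmem
      simp only [pow_zero] at this
      linarith
    simp only [Pi.div_apply]
    rw [hdt, hgeq]
    have h1 : (1 : ℝ) - ψ t 0 ≠ 0 := (hden t).ne'
    have h2 : (∑ j ∈ Finset.range x, (ψ t 0) ^ j) ≠ 0 := hGpos.ne'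
    field_simp
  · -- Part 2
    intro s hs
    obtain ⟨hs0, hs1⟩ := hs
    have hsabs : |s| < 1 := by rw [abs_of_nonneg hs0]; exact hs1
    rw [(hgder s hsabs).deriv]
    refine Summable.tsum_le_tsum (fun k => ?_) (aux_summable_deriv hαabs hsabs) hαm
    calc (k : ℝ) * α k * s ^ (k - 1) ≤ (k : ℝ) * α k * 1 :=
        mul_le_mul_of_nonneg_left (pow_le_one₀ hs0 hs1.le) (mul_nonneg (Nat.cast_nonneg k) (hα0 k))
      _ = (k : ℝ) * α k := mul_one _
  · -- Part 3
    rw [hasDerivWithinAt_iff_tendsto_slope, diff_singleton_eq_self (by simp)]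
    have main : Tendsto (fun y : ℝ => ∑' k : ℕ, α k * ∑ j ∈ Finset.range k, y ^ j)
        (𝓝[<] (1:ℝ)) (𝓝 (∑' k : ℕ, (k : ℝ) * α k)) := by
      refine tendsto_tsum_of_dominated_convergence hαm (fun k => ?_) ?_
      · have hcont : Continuous fun y : ℝ => α k * ∑ j ∈ Finset.range k, y ^ j :=
          continuous_const.mul (continuous_finset_sum _ fun j _ => continuous_pow j)
        have h' : Tendsto (fun y : ℝ => α k * ∑ j ∈ Finset.range k, y ^ j) (𝓝[<] (1:ℝ))
            (𝓝 (α k * ∑ j ∈ Finset.range k, (1:ℝ) ^ j)) :=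
          (hcont.tendsto 1).mono_left nhdsWithin_le_nhds
        simpa [mul_comm] using h'
      · filter_upwards [Ioo_mem_nhdsLT_of_mem
          (show (1:ℝ) ∈ Ioc (0:ℝ) 1 from ⟨one_pos, le_refl 1⟩)] with y hy k
        rw [Real.norm_eq_abs, abs_of_nonneg (mul_nonneg (hα0 k)
          (Finset.sum_nonneg fun j _ => pow_nonneg hy.1.le j))]
        calc α k * ∑ j ∈ Finset.range k, y ^ j ≤ α k * ∑ _j ∈ Finset.range k, (1:ℝ) :=
            mul_le_mul_of_nonneg_left
              (Finset.sum_le_sum fun j _ => pow_le_one₀ hy.1.le hy.2.le) (hα0 k)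
          _ = (k : ℝ) * α k := by
            simp [Finset.sum_const, Finset.card_range, mul_comm]
    refine main.congr' ?_
    filter_upwards [Ioo_mem_nhdsLT_of_mem
      (show (1:ℝ) ∈ Ioc (0:ℝ) 1 from ⟨one_pos, le_refl 1⟩)] with y hy
    have hyabs : |y| < 1 := abs_lt.mpr ⟨by linarith [hy.1], hy.2⟩
    have hy1 : y - 1 ≠ 0 := sub_ne_zero.mpr (ne_of_lt hy.2)
    have Sy : Summable fun k => α k * y ^ k := aux_summable_pow hαabs hyabs
    have S1 : Summable fun k : ℕ => α k * (1:ℝ) ^ k := by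
      refine hαsum.congr fun k => ?_
      simp
    show (∑' k : ℕ, α k * ∑ j ∈ Finset.range k, y ^ j) = slope g 1 y
    rw [slope_def_field]
    have hgy : g y = ∑' k, α k * y ^ k := rfl
    have hg1' : g 1 = ∑' k : ℕ, α k * (1:ℝ) ^ k := rfl
    rw [hgy, hg1', ← Summable.tsum_sub Sy S1, ← tsum_div_const]
    refine tsum_congr fun k => ?_
    rw [eq_div_iff hy1]
    calc α k * (∑ j ∈ Finset.range k, y ^ j) * (y - 1)
        = α k * ((∑ j ∈ Finset.range k, y ^ j) * (y - 1)) := by ring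
      _ = α k * (y ^ k - 1) := by rw [geom_sum_mul]
      _ = α k * y ^ k - α k * 1 ^ k := by ring
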